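/- Let G be a threshold graph with representation (K, S), K of even size k, c_k having no neighbour in S, K partitioned into K_top = {c_1,...,c_{k/2}} and K_bot = {c_{k/2+1},...,c_k}, and X = {u ∈ S : K_top ⊆ N(u)}. Then the union of all edges inside K_top, all edges inside K_bot, and all edges between S and K_bot is a triangle hitting set of G of size at most 2·binom(k/2, 2) + |X|·(k/2 − 1). -/

import Mathlib

open Finset

/-- A triangle in `G`: a 3-element vertex set that is a clique. -/
def IsTriangle {V : Type*} (G : SimpleGraph V) (t : Finset V) : Prop :=
  t.card = 3 ∧ G.IsClique ↑t

/-- A triangle packing: a family of pairwise edge-disjoint triangles. -/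
def IsTrianglePacking {V : Type*} [DecidableEq V] (G : SimpleGraph V)
    (P : Finset (Finset V)) : Prop :=
  (∀ t ∈ P, IsTriangle G t) ∧
    ∀ t₁ ∈ P, ∀ t₂ ∈ P, t₁ ≠ t₂ → (t₁ ∩ t₂).card ≤ 1

/-- A triangle hitting set: a set of edges of `G` meeting every triangle of `G`. -/
def IsTriangleHitting {V : Type*} [Fintype V] [DecidableEq V] (G : SimpleGraph V)
    [DecidableRel G.Adj] (H : Finset (Sym2 V)) : Prop :=
  H ⊆ G.edgeFinset ∧
    ∀ t : Finset V, IsTriangle G t → ∃ e ∈ H, ∀ v ∈ e, v ∈ t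

/-- The minimum size of a triangle hitting set, `τ(G)`. -/
noncomputable def triTau {V : Type*} [Fintype V] [DecidableEq V] (G : SimpleGraph V)
    [DecidableRel G.Adj] : ℕ :=
  sInf {n | ∃ H : Finset (Sym2 V), IsTriangleHitting G H ∧ H.card = n}

/-- The maximum size of a triangle packing, `μ(G)`. -/
noncomputable def triMu {V : Type*} [Fintype V] [DecidableEq V] (G : SimpleGraph V) : ℕ :=
  sSup {n | ∃ P : Finset (Finset V), IsTrianglePacking G P ∧ P.card = n}

/-- A set of edges forming a matching (pairwise vertex-disjoint edges). -/
def IsMatchingSet {V : Type*} (M : Finset (Sym2 V)) : Prop :=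
  ∀ e₁ ∈ M, ∀ e₂ ∈ M, e₁ ≠ e₂ → ∀ v : V, v ∈ e₁ → v ∉ e₂

/-- A threshold representation of a graph `G`: the `c i` form a clique with nested
closed neighbourhoods, the `u j` form an independent set with nested neighbourhoods,
and together they partition the vertex set. -/
structure ThresholdRep {V : Type*} (G : SimpleGraph V) where
  k : ℕ
  s : ℕ
  c : Fin k → V
  u : Fin s → V
  inj_c : Function.Injective c
  inj_u : Function.Injective u
  disj : ∀ i j, c i ≠ u j
  cover : ∀ v : V, (∃ i, v = c i) ∨ (∃ j, v = u j)
  clique : ∀ i j, i ≠ j → G.Adj (c i) (c j)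
  indep : ∀ i j, ¬ G.Adj (u i) (u j)
  nestedK : ∀ (i : Fin k) (h : i.val + 1 < k),
    (insert (c ⟨i.val + 1, h⟩) (G.neighborSet (c ⟨i.val + 1, h⟩)) : Set V) ⊆
      insert (c i) (G.neighborSet (c i))
  nestedS : ∀ (j : Fin s) (h : j.val + 1 < s),
    G.neighborSet (u j) ⊆ G.neighborSet (u ⟨j.val + 1, h⟩)

/-- A co-chain representation of a graph `G`: two cliques `c` and `d` partitioning the
vertex set, with nested closed neighbourhoods along each ordering. -/
structure CoChainRep {V : Type*} (G : SimpleGraph V) where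
  n : ℕ
  m : ℕ
  c : Fin n → V
  d : Fin m → V
  inj_c : Function.Injective c
  inj_d : Function.Injective d
  disj : ∀ i j, c i ≠ d j
  cover : ∀ v : V, (∃ i, v = c i) ∨ (∃ j, v = d j)
  clique1 : ∀ i j, i ≠ j → G.Adj (c i) (c j)
  clique2 : ∀ i j, i ≠ j → G.Adj (d i) (d j)
  nested1 : ∀ (i : Fin n) (h : i.val + 1 < n),
    (insert (c ⟨i.val + 1, h⟩) (G.neighborSet (c ⟨i.val + 1, h⟩)) : Set V) ⊆
      insert (c i) (G.neighborSet (c i))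
  nested2 : ∀ (i : Fin m) (h : i.val + 1 < m),
    (insert (d i) (G.neighborSet (d i)) : Set V) ⊆
      insert (d ⟨i.val + 1, h⟩) (G.neighborSet (d ⟨i.val + 1, h⟩))


/-- Chain lemma: nested closed neighbourhoods propagate adjacency to smaller indices. -/
lemma ThresholdRep.adj_chain {V : Type*} {G : SimpleGraph V} (R : ThresholdRep G)
    (j : Fin R.s) : ∀ n : ℕ, ∀ a b : Fin R.k, b.val = a.val + n →
    G.Adj (R.c b) (R.u j) → G.Adj (R.c a) (R.u j) := by
  intro n
  induction n with
  | zero =>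
    intro a b hb h
    have : a = b := Fin.ext (by omega)
    rwa [this]
  | succ n ih =>
    intro a b hb h
    have hlt : a.val + n + 1 < R.k := by omega
    set b' : Fin R.k := ⟨a.val + n, by omega⟩ with hb'
    have hbeq : b = ⟨b'.val + 1, hlt⟩ := Fin.ext (by simp [hb']; omega)
    have hsub := R.nestedK b' hlt
    have hmem : R.u j ∈ (insert (R.c ⟨b'.val + 1, hlt⟩)
        (G.neighborSet (R.c ⟨b'.val + 1, hlt⟩)) : Set V) := by
      rw [← hbeq]; exact Set.mem_insert_of_mem _ h
    rcases Set.mem_insert_iff.mp (hsub hmem) with h' | h'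
    · exact absurd h'.symm (R.disj b' j)
    · exact ih a b' rfl h'

lemma ThresholdRep.adj_of_le {V : Type*} {G : SimpleGraph V} (R : ThresholdRep G)
    {j : Fin R.s} {a b : Fin R.k} (hab : a.val ≤ b.val)
    (h : G.Adj (R.c b) (R.u j)) : G.Adj (R.c a) (R.u j) :=
  R.adj_chain j (b.val - a.val) a b (by omega) h
/-- In a threshold graph with clique of even size `k` whose last clique vertex has no
neighbour in `S`, the edges inside the top half, the edges inside the bottom half, and
all edges between `S` and the bottom half form a triangle hitting set of size at most
`2 * (k/2 choose 2) + |X| * (k/2 - 1)`, where `X` is the set of vertices of `S`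
dominating the top half. -/
theorem threshold_hitting_halves {V : Type*} [Fintype V] [DecidableEq V]
    (G : SimpleGraph V) [DecidableRel G.Adj]
    (R : ThresholdRep G) (hpos : 0 < R.k) (heven : Even R.k)
    (hlast : ∀ j : Fin R.s, ¬ G.Adj (R.c ⟨R.k - 1, Nat.sub_lt hpos one_pos⟩) (R.u j))
    (X : Finset (Fin R.s))
    (hX : X = Finset.univ.filter
      (fun j => ∀ i : Fin R.k, i.val < R.k / 2 → G.Adj (R.c i) (R.u j)))
    (H : Finset (Sym2 V))
    (hH : H =
      ((Finset.univ : Finset (Fin R.k × Fin R.k)).filter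
        (fun p => p.1 ≠ p.2 ∧ p.1.val < R.k / 2 ∧ p.2.val < R.k / 2)).image
        (fun p => s(R.c p.1, R.c p.2)) ∪
      ((Finset.univ : Finset (Fin R.k × Fin R.k)).filter
        (fun p => p.1 ≠ p.2 ∧ R.k / 2 ≤ p.1.val ∧ R.k / 2 ≤ p.2.val)).image
        (fun p => s(R.c p.1, R.c p.2)) ∪
      ((Finset.univ : Finset (Fin R.k × Fin R.s)).filter
        (fun p => R.k / 2 ≤ p.1.val ∧ G.Adj (R.c p.1) (R.u p.2))).image
        (fun p => s(R.c p.1, R.u p.2))) :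
    IsTriangleHitting G H ∧
      H.card ≤ 2 * (R.k / 2).choose 2 + X.card * (R.k / 2 - 1) := by
  have hk2 : R.k % 2 = 0 := Nat.even_iff.mp heven
  set h : ℕ := R.k / 2 with hh
  -- membership helpers
  have memTop : ∀ i1 i2 : Fin R.k, i1 ≠ i2 → i1.val < h → i2.val < h →
      s(R.c i1, R.c i2) ∈ H := by
    intro i1 i2 hne h1 h2
    rw [hH]
    refine mem_union_left _ (mem_union_left _ (mem_image.mpr ⟨(i1, i2), ?_, rfl⟩))
    simp [hne, h1, h2]
  have memBot : ∀ i1 i2 : Fin R.k, i1 ≠ i2 → h ≤ i1.val → h ≤ i2.val →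
      s(R.c i1, R.c i2) ∈ H := by
    intro i1 i2 hne h1 h2
    rw [hH]
    refine mem_union_left _ (mem_union_right _ (mem_image.mpr ⟨(i1, i2), ?_, rfl⟩))
    simp [hne, h1, h2]
  have memMix : ∀ (i : Fin R.k) (j : Fin R.s), h ≤ i.val → G.Adj (R.c i) (R.u j) →
      s(R.c i, R.u j) ∈ H := by
    intro i j h1 h2
    rw [hH]
    refine mem_union_right _ (mem_image.mpr ⟨(i, j), ?_, rfl⟩)
    simp [h1, h2]
  constructor
  · constructor
    · -- H ⊆ edgeFinset
      rw [hH]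
      intro e he
      rw [SimpleGraph.mem_edgeFinset]
      rcases mem_union.mp he with he | he
      · rcases mem_union.mp he with he | he <;>
        · obtain ⟨p, hp, rfl⟩ := mem_image.mp he
          simp only [mem_filter] at hp
          exact (SimpleGraph.mem_edgeSet G).mpr (R.clique p.1 p.2 hp.2.1)
      · obtain ⟨p, hp, rfl⟩ := mem_image.mp he
        simp only [mem_filter] at hp
        exact (SimpleGraph.mem_edgeSet G).mpr hp.2.2
    · -- hits every triangle
      rintro t ⟨hcard, hclq⟩
      obtain ⟨x, y, z, hxy, hxz, hyz, ht⟩ := Finset.card_eq_three.mp hcard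
      have hxt : x ∈ t := by simp [ht]
      have hyt : y ∈ t := by simp [ht]
      have hzt : z ∈ t := by simp [ht]
      have axy : G.Adj x y := hclq hxt hyt hxy
      have axz : G.Adj x z := hclq hxt hzt hxz
      have ayz : G.Adj y z := hclq hyt hzt hyz
      -- helper producing a hitting edge from two clique vertices + one S vertex
      have keyCCU : ∀ (i1 i2 : Fin R.k) (j : Fin R.s), i1 ≠ i2 →
          G.Adj (R.c i1) (R.u j) → G.Adj (R.c i2) (R.u j) →
          ∃ e ∈ H, ∀ v ∈ e, v = R.c i1 ∨ v = R.c i2 ∨ v = R.u j := by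
        intro i1 i2 j hne ha1 ha2
        by_cases h1 : i1.val < h <;> by_cases h2 : i2.val < h
        · exact ⟨s(R.c i1, R.c i2), memTop i1 i2 hne h1 h2, by
            intro v hv; rcases Sym2.mem_iff.mp hv with rfl | rfl <;> tauto⟩
        · exact ⟨s(R.c i2, R.u j), memMix i2 j (by omega) ha2, by
            intro v hv; rcases Sym2.mem_iff.mp hv with rfl | rfl <;> tauto⟩
        · exact ⟨s(R.c i1, R.u j), memMix i1 j (by omega) ha1, by
            intro v hv; rcases Sym2.mem_iff.mp hv with rfl | rfl <;> tauto⟩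
        · exact ⟨s(R.c i1, R.c i2), memBot i1 i2 hne (by omega) (by omega), by
            intro v hv; rcases Sym2.mem_iff.mp hv with rfl | rfl <;> tauto⟩
      have keyCCC : ∀ i1 i2 i3 : Fin R.k, i1 ≠ i2 → i1 ≠ i3 → i2 ≠ i3 →
          ∃ e ∈ H, ∀ v ∈ e, v = R.c i1 ∨ v = R.c i2 ∨ v = R.c i3 := by
        intro i1 i2 i3 h12 h13 h23
        by_cases h1 : i1.val < h <;> by_cases h2 : i2.val < h <;> by_cases h3 : i3.val < h
        · exact ⟨s(R.c i1, R.c i2), memTop i1 i2 h12 h1 h2, by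
            intro v hv; rcases Sym2.mem_iff.mp hv with rfl | rfl <;> tauto⟩
        · exact ⟨s(R.c i1, R.c i2), memTop i1 i2 h12 h1 h2, by
            intro v hv; rcases Sym2.mem_iff.mp hv with rfl | rfl <;> tauto⟩
        · exact ⟨s(R.c i1, R.c i3), memTop i1 i3 h13 h1 h3, by
            intro v hv; rcases Sym2.mem_iff.mp hv with rfl | rfl <;> tauto⟩
        · exact ⟨s(R.c i2, R.c i3), memBot i2 i3 h23 (by omega) (by omega), by
            intro v hv; rcases Sym2.mem_iff.mp hv with rfl | rfl <;> tauto⟩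
        · exact ⟨s(R.c i2, R.c i3), memTop i2 i3 h23 h2 h3, by
            intro v hv; rcases Sym2.mem_iff.mp hv with rfl | rfl <;> tauto⟩
        · exact ⟨s(R.c i1, R.c i3), memBot i1 i3 h13 (by omega) (by omega), by
            intro v hv; rcases Sym2.mem_iff.mp hv with rfl | rfl <;> tauto⟩
        · exact ⟨s(R.c i1, R.c i2), memBot i1 i2 h12 (by omega) (by omega), by
            intro v hv; rcases Sym2.mem_iff.mp hv with rfl | rfl <;> tauto⟩
        · exact ⟨s(R.c i1, R.c i2), memBot i1 i2 h12 (by omega) (by omega), by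
            intro v hv; rcases Sym2.mem_iff.mp hv with rfl | rfl <;> tauto⟩
      have finish : ∀ (a b c : V), t = {a, b, c} →
          (∃ e ∈ H, ∀ v ∈ e, v = a ∨ v = b ∨ v = c) →
          ∃ e ∈ H, ∀ v ∈ e, v ∈ t := by
        rintro a b c rfl ⟨e, he, hev⟩
        exact ⟨e, he, fun v hv => by rcases hev v hv with rfl | rfl | rfl <;> simp⟩
      rcases R.cover x with ⟨i1, rfl⟩ | ⟨j1, rfl⟩ <;>
        rcases R.cover y with ⟨i2, hy⟩ | ⟨j2, hy⟩ <;>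
          rcases R.cover z with ⟨i3, hz⟩ | ⟨j3, hz⟩ <;> subst hy <;> subst hz
      · exact finish _ _ _ ht (keyCCC i1 i2 i3 (fun e => hxy (congrArg R.c e))
          (fun e => hxz (congrArg R.c e)) (fun e => hyz (congrArg R.c e)))
      · refine finish _ _ _ ht ?_
        obtain ⟨e, he, hev⟩ := keyCCU i1 i2 j3 (fun e => hxy (congrArg R.c e)) axz ayz
        exact ⟨e, he, fun v hv => hev v hv⟩
      · refine finish _ _ _ ht ?_
        obtain ⟨e, he, hev⟩ := keyCCU i1 i3 j2 (fun e => hxz (congrArg R.c e)) axy ayz.symm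
        exact ⟨e, he, fun v hv => by rcases hev v hv with h' | h' | h' <;> tauto⟩
      · exact absurd ayz (R.indep j2 j3)
      · refine finish _ _ _ ht ?_
        obtain ⟨e, he, hev⟩ := keyCCU i2 i3 j1 (fun e => hyz (congrArg R.c e)) axy.symm axz.symm
        exact ⟨e, he, fun v hv => by rcases hev v hv with h' | h' | h' <;> tauto⟩
      · exact absurd axz (R.indep j1 j3)
      · exact absurd axy (R.indep j1 j2)
      · exact absurd axy (R.indep j1 j2)
  · -- cardinality bound
    have hfilt_top : ((univ : Finset (Fin R.k)).filter (fun i => i.val < h)).card ≤ h := by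
      calc ((univ : Finset (Fin R.k)).filter (fun i => i.val < h)).card
          ≤ (Finset.range h).card := by
            apply Finset.card_le_card_of_injOn (fun i => i.val)
            · intro i hi; simp only [Finset.mem_coe, mem_filter] at hi; simpa using hi.2
            · intro a _ b _ hab; exact Fin.ext hab
        _ = h := Finset.card_range h
    have hfilt_bot : ((univ : Finset (Fin R.k)).filter
        (fun i => h ≤ i.val ∧ i.val < R.k - 1)).card ≤ h - 1 := by
      calc ((univ : Finset (Fin R.k)).filter (fun i => h ≤ i.val ∧ i.val < R.k - 1)).card
          ≤ (Finset.Ico h (R.k - 1)).card := by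
            apply Finset.card_le_card_of_injOn (fun i => i.val)
            · intro i hi; simp only [Finset.mem_coe, mem_filter] at hi
              simp only [Finset.mem_coe, Finset.mem_Ico]; exact hi.2
            · intro a _ b _ hab; exact Fin.ext hab
        _ = R.k - 1 - h := Nat.card_Ico _ _
        _ ≤ h - 1 := by omega
    -- bound each image
    set T : Finset V := ((univ : Finset (Fin R.k)).filter (fun i => i.val < h)).image R.c
      with hT
    set B : Finset V := ((univ : Finset (Fin R.k)).filter (fun i => h ≤ i.val)).image R.c
      with hB
    have hTcard : T.card ≤ h := le_trans (Finset.card_image_le) hfilt_top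
    have hBcard : B.card ≤ h := by
      refine le_trans (Finset.card_image_le) ?_
      calc ((univ : Finset (Fin R.k)).filter (fun i => h ≤ i.val)).card
          ≤ (Finset.Ico h R.k).card := by
            apply Finset.card_le_card_of_injOn (fun i => i.val)
            · intro i hi; simp only [Finset.mem_coe, mem_filter] at hi
              simp only [Finset.mem_coe, Finset.mem_Ico]; exact ⟨hi.2, i.isLt⟩
            · intro a _ b _ hab; exact Fin.ext hab
        _ = R.k - h := Nat.card_Ico _ _
        _ ≤ h := by omega
    have himtop : (((Finset.univ : Finset (Fin R.k × Fin R.k)).filter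
        (fun p => p.1 ≠ p.2 ∧ p.1.val < h ∧ p.2.val < h)).image
        (fun p => s(R.c p.1, R.c p.2))).card ≤ h.choose 2 := by
      have hsub : (((Finset.univ : Finset (Fin R.k × Fin R.k)).filter
          (fun p => p.1 ≠ p.2 ∧ p.1.val < h ∧ p.2.val < h)).image
          (fun p => s(R.c p.1, R.c p.2))) ⊆ T.offDiag.image Sym2.mk.uncurry := by
        intro e he
        obtain ⟨p, hp, rfl⟩ := mem_image.mp he
        simp only [mem_filter] at hp
        refine mem_image.mpr ⟨(R.c p.1, R.c p.2), Finset.mem_offDiag.mpr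
          ⟨?_, ?_, fun hc => hp.2.1 (R.inj_c hc)⟩, rfl⟩
        · exact mem_image.mpr ⟨p.1, by simp [hp.2.2.1], rfl⟩
        · exact mem_image.mpr ⟨p.2, by simp [hp.2.2.2], rfl⟩
      calc _ ≤ (T.offDiag.image Sym2.mk.uncurry).card := Finset.card_le_card hsub
        _ = T.card.choose 2 := Sym2.card_image_offDiag T
        _ ≤ h.choose 2 := Nat.choose_le_choose 2 hTcard
    have himbot : (((Finset.univ : Finset (Fin R.k × Fin R.k)).filter
        (fun p => p.1 ≠ p.2 ∧ h ≤ p.1.val ∧ h ≤ p.2.val)).image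
        (fun p => s(R.c p.1, R.c p.2))).card ≤ h.choose 2 := by
      have hsub : (((Finset.univ : Finset (Fin R.k × Fin R.k)).filter
          (fun p => p.1 ≠ p.2 ∧ h ≤ p.1.val ∧ h ≤ p.2.val)).image
          (fun p => s(R.c p.1, R.c p.2))) ⊆ B.offDiag.image Sym2.mk.uncurry := by
        intro e he
        obtain ⟨p, hp, rfl⟩ := mem_image.mp he
        simp only [mem_filter] at hp
        refine mem_image.mpr ⟨(R.c p.1, R.c p.2), Finset.mem_offDiag.mpr
          ⟨?_, ?_, fun hc => hp.2.1 (R.inj_c hc)⟩, rfl⟩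
        · exact mem_image.mpr ⟨p.1, by simp [hp.2.2.1], rfl⟩
        · exact mem_image.mpr ⟨p.2, by simp [hp.2.2.2], rfl⟩
      calc _ ≤ (B.offDiag.image Sym2.mk.uncurry).card := Finset.card_le_card hsub
        _ = B.card.choose 2 := Sym2.card_image_offDiag B
        _ ≤ h.choose 2 := Nat.choose_le_choose 2 hBcard
    have himmix : (((Finset.univ : Finset (Fin R.k × Fin R.s)).filter
        (fun p => h ≤ p.1.val ∧ G.Adj (R.c p.1) (R.u p.2))).image
        (fun p => s(R.c p.1, R.u p.2))).card ≤ X.card * (h - 1) := by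
      set F := ((Finset.univ : Finset (Fin R.k × Fin R.s)).filter
        (fun p => h ≤ p.1.val ∧ G.Adj (R.c p.1) (R.u p.2))) with hF
      have hinj : Set.InjOn (fun p : Fin R.k × Fin R.s => s(R.c p.1, R.u p.2)) F := by
        intro a _ b _ hab
        simp only [Sym2.eq, Sym2.rel_iff', Prod.mk.injEq, Prod.swap_prod_mk] at hab
        rcases hab with ⟨h1, h2⟩ | ⟨h1, h2⟩
        · exact Prod.ext (R.inj_c h1) (R.inj_u h2)
        · exact absurd h1 (R.disj a.1 b.2)
      rw [Finset.card_image_of_injOn hinj]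
      have hFsub : F ⊆ (((univ : Finset (Fin R.k)).filter
          (fun i => h ≤ i.val ∧ i.val < R.k - 1)) ×ˢ X) := by
        intro p hp
        simp only [hF, mem_filter] at hp
        refine Finset.mem_product.mpr ⟨?_, ?_⟩
        · simp only [mem_filter]
          refine ⟨mem_univ _, hp.2.1, ?_⟩
          by_contra hc
          have : p.1 = ⟨R.k - 1, Nat.sub_lt hpos one_pos⟩ := Fin.ext (by
            have := p.1.isLt; simp; omega)
          exact hlast p.2 (this ▸ hp.2.2)
        · rw [hX]
          simp only [mem_filter]
          refine ⟨mem_univ _, fun i hi => ?_⟩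
          exact R.adj_of_le (by omega) hp.2.2
      calc F.card ≤ _ := Finset.card_le_card hFsub
        _ = ((univ : Finset (Fin R.k)).filter
            (fun i => h ≤ i.val ∧ i.val < R.k - 1)).card * X.card := Finset.card_product _ _
        _ ≤ (h - 1) * X.card := Nat.mul_le_mul_right _ hfilt_bot
        _ = X.card * (h - 1) := Nat.mul_comm _ _
    rw [hH]
    refine le_trans (le_trans (Finset.card_union_le _ _)
      (Nat.add_le_add_right (Finset.card_union_le _ _) _)) ?_
    have hsum := Nat.add_le_add (Nat.add_le_add himtop himbot) himmix
    omega
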